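/- Let X be a separable infinite-dimensional complex Banach space and let S be a bounded linear operator on X whose generalised kernel N∞(S) is dense in X. Then for every ε > 0 there exists a bounded operator S' on X with ‖S − S'‖ < ε such that S' is a generalised backward 1-shift adapted to some linearly independent sequence with dense linear span. -/

import Mathlib

/-- `S` is a generalised backward 1-shift adapted to the sequence `x` (indexed from 0,
so `x 0` plays the role of `x₁`): `S x₀ = 0`, and for `k ≥ 1`, `S xₖ` is a linear
combination of `x₀, …, x_{k-1}` in which the coefficient of `x_{k-1}` is nonzero. -/
def IsGenBackwardOneShift {X : Type*} [NormedAddCommGroup X] [NormedSpace ℂ X]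
    (S : X →L[ℂ] X) (x : ℕ → X) : Prop :=
  S (x 0) = 0 ∧
    ∀ k : ℕ, 1 ≤ k → ∃ c : ℕ → ℂ,
      S (x k) = ∑ i ∈ Finset.range k, c i • x i ∧ c (k - 1) ≠ 0


noncomputable section
namespace Stmt7Aux
open Finset Submodule Filter Metric Topology
set_option linter.unusedSectionVars false
set_option maxHeartbeats 1000000

variable {X : Type*} [NormedAddCommGroup X] [NormedSpace ℂ X]

set_option linter.unusedSectionVars false
variable {X : Type*} [NormedAddCommGroup X] [NormedSpace ℂ X]

lemma getD_mem (L : List X) (k : ℕ) (hk : k < L.length) : L.getD k 0 ∈ L := by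
  rw [List.getD_eq_getElem _ _ hk]; exact List.getElem_mem _

lemma range_getD (L : List X) :
    (Set.range fun i : Fin L.length => L.getD (i : ℕ) 0) = {a | a ∈ L} := by
  ext a
  constructor
  · rintro ⟨i, rfl⟩
    exact getD_mem L i i.isLt
  · intro ha
    obtain ⟨i, hi, rfl⟩ := List.mem_iff_getElem.1 ha
    exact ⟨⟨i, hi⟩, List.getD_eq_getElem _ _ hi⟩

lemma spanL_eq (L : List X) :
    Submodule.span ℂ {a | a ∈ L}
      = Submodule.span ℂ (Set.range fun i : Fin L.length => L.getD (i : ℕ) 0) := by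
  rw [range_getD]

lemma exists_coeffs {L : List X} {v : X} (hv : v ∈ Submodule.span ℂ {a | a ∈ L}) :
    ∃ c : ℕ → ℂ, v = ∑ i ∈ Finset.range L.length, c i • L.getD i 0 := by
  rw [spanL_eq] at hv
  obtain ⟨c, hc⟩ := (mem_span_range_iff_exists_fun ℂ).1 hv
  refine ⟨fun i => if h : i < L.length then c ⟨i, h⟩ else 0, ?_⟩
  rw [← hc, ← Fin.sum_univ_eq_sum_range]
  exact Finset.sum_congr rfl fun i _ => by simp [i.isLt]

lemma sum_single_smul (k j : ℕ) (hj : j < k) (f : ℕ → X) (a : ℂ) :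
    ∑ i ∈ Finset.range k, (if i = j then a else 0) • f i = a • f j := by
  rw [Finset.sum_eq_single j]
  · simp
  · intro b _ hb; simp [hb]
  · intro h; exact absurd (Finset.mem_range.2 hj) h

lemma span_stable (S : X →L[ℂ] X) {A : Set X} (h : ∀ a ∈ A, S a ∈ Submodule.span ℂ A) :
    ∀ v ∈ Submodule.span ℂ A, S v ∈ Submodule.span ℂ A := by
  intro v hv
  induction hv using Submodule.span_induction with
  | mem x hx => exact h x hx
  | zero => simp
  | add x y _ _ hx hy => rw [map_add]; exact add_mem hx hy
  | smul a x _ hx => rw [map_smul]; exact smul_mem _ _ hx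

lemma chain_li {M : Type*} [AddCommGroup M] [Module ℂ M] (T : M →ₗ[ℂ] M) (v : M) (m : ℕ)
    (h0 : (T ^ m) v = 0) (h1 : (T ^ (m - 1)) v ≠ 0) :
    LinearIndependent ℂ fun i : Fin m => (T ^ (m - 1 - (i : ℕ))) v := by
  classical
  have hbig : ∀ e, m ≤ e → (T ^ e) v = 0 := by
    intro e he
    have : T ^ e = T ^ (e - m) * T ^ m := by rw [← pow_add]; congr 1; omega
    rw [this, Module.End.mul_apply, h0, map_zero]
  rw [Fintype.linearIndependent_iff]
  intro c hc
  by_contra hex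
  push_neg at hex
  obtain ⟨i, hi⟩ := hex
  have hm : 0 < m := i.pos
  set s : Finset (Fin m) := Finset.univ.filter (fun j => c j ≠ 0) with hs
  have hne : s.Nonempty := ⟨i, by simp [hs, hi]⟩
  set i₀ := s.max' hne with hi₀
  have hc0 : c i₀ ≠ 0 := by
    have := s.max'_mem hne
    simp only [hs, Finset.mem_filter] at this
    exact this.2
  have hmax : ∀ j : Fin m, c j ≠ 0 → (j : ℕ) ≤ (i₀ : ℕ) := by
    intro j hj
    exact s.le_max' j (by simp [hs, hj])
  have happ : (T ^ (i₀ : ℕ)) (∑ j, c j • (T ^ (m - 1 - (j : ℕ))) v) = 0 := by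
    rw [hc, map_zero]
  rw [map_sum] at happ
  have hterm : ∀ j : Fin m, (T ^ (i₀ : ℕ)) (c j • (T ^ (m - 1 - (j : ℕ))) v)
      = c j • (T ^ ((i₀ : ℕ) + (m - 1 - (j : ℕ)))) v := by
    intro j; rw [map_smul, pow_add, Module.End.mul_apply]
  rw [Finset.sum_congr rfl fun j _ => hterm j] at happ
  have hlt := i₀.isLt
  have hexp : (i₀ : ℕ) + (m - 1 - (i₀ : ℕ)) = m - 1 := by omega
  have hsingle : (∑ j : Fin m, c j • (T ^ ((i₀ : ℕ) + (m - 1 - (j : ℕ)))) v)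
      = c i₀ • (T ^ (m - 1)) v := by
    rw [Finset.sum_eq_single i₀]
    · rw [hexp]
    · intro j _ hji
      by_cases hcj : c j = 0
      · simp [hcj]
      · have hj : (j : ℕ) < (i₀ : ℕ) :=
          lt_of_le_of_ne (hmax j hcj) (fun h => hji (Fin.ext h))
        rw [hbig _ (by omega), smul_zero]
    · intro h; exact absurd (Finset.mem_univ i₀) h
  rw [hsingle] at happ
  exact h1 ((smul_eq_zero.1 happ).resolve_left hc0)

lemma mapQ_pow {V : Submodule ℂ X} (T : X →ₗ[ℂ] X) (h : V ≤ V.comap T) (i : ℕ) (y : X) :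
    ((V.mapQ V T h) ^ i) (Submodule.Quotient.mk y) = Submodule.Quotient.mk ((T ^ i) y) := by
  induction i with
  | zero => simp
  | succ n ih =>
      rw [pow_succ', Module.End.mul_apply, ih, Submodule.mapQ_apply, ← Module.End.mul_apply,
        ← pow_succ']

lemma clm_pow_apply (S : X →L[ℂ] X) (i : ℕ) (w : X) :
    ((S : X →ₗ[ℂ] X) ^ i) w = (S ^ i) w := by
  induction i generalizing w with
  | zero => simp
  | succ n ih =>
      rw [pow_succ, pow_succ, Module.End.mul_apply, ContinuousLinearMap.mul_apply, ih]
      simp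



structure BS (S : X →L[ℂ] X) (ε : ℝ) (u : ℕ → X) (n : ℕ) : Type _ where
  L : List X
  F : X →L[ℂ] X
  hlen : n ≤ L.length
  hind : LinearIndependent ℂ fun i : Fin L.length => L.getD (i : ℕ) 0
  hrange : ∀ v : X, F v ∈ Submodule.span ℂ {a | a ∈ L}
  hnorm : ‖F‖ ≤ ε / 2 * (1 - (1/2 : ℝ) ^ n)
  hSV : ∀ a ∈ L, S a ∈ Submodule.span ℂ {a | a ∈ L}
  hshift0 : ∀ _ : 0 < L.length, (S + F) (L.getD 0 0) = 0
  hshift : ∀ k : ℕ, 0 < k → k < L.length → ∃ c : ℕ → ℂ,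
      (S + F) (L.getD k 0) = (∑ i ∈ Finset.range k, c i • L.getD i 0) ∧ c (k - 1) ≠ 0
  hdense : ∀ m : ℕ, m < n → ∃ v ∈ Submodule.span ℂ {a | a ∈ L},
      ‖v - u (Nat.unpair m).1‖ < 1 / ((Nat.unpair m).2 + 1)

def BSinit (S : X →L[ℂ] X) (ε : ℝ) (u : ℕ → X) : BS S ε u 0 where
  L := []
  F := 0
  hlen := le_rfl
  hind := by
    haveI : IsEmpty (Fin ([] : List X).length) := by simp [List.length]; exact Fin.isEmpty'
    exact linearIndependent_empty_type
  hrange := fun v => by simp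
  hnorm := by simp
  hSV := fun a ha => absurd ha List.not_mem_nil
  hshift0 := fun h => absurd h (by simp)
  hshift := fun k hk hk' => absurd hk' (by simp)
  hdense := fun m hm => absurd hm (Nat.not_lt_zero m)


variable [CompleteSpace X]

lemma exists_functional {V : Submodule ℂ X} (hVc : IsClosed (V : Set X)) {z : X} (hz : z ∉ V) :
    ∃ φ : X →L[ℂ] ℂ, (∀ v ∈ V, φ v = 0) ∧ φ z = 1 := by
  haveI : IsClosed (V : Set X) := hVc
  have hz' : (Submodule.Quotient.mk z : X ⧸ V) ≠ 0 := by
    simpa [Submodule.Quotient.mk_eq_zero] using hz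
  obtain ⟨g, hg1, hgz⟩ := exists_dual_vector ℂ (Submodule.Quotient.mk z : X ⧸ V) (norm_ne_zero_iff.2 hz')
  let π : X →L[ℂ] X ⧸ V := LinearMap.mkContinuous V.mkQ 1 (fun w => by
    simpa using Submodule.Quotient.norm_mk_le V w)
  have hπ : ∀ w : X, π w = Submodule.Quotient.mk w := fun w => rfl
  have hnz : (‖(Submodule.Quotient.mk z : X ⧸ V)‖ : ℂ) ≠ 0 := by
    exact_mod_cast norm_ne_zero_iff.2 hz'
  refine ⟨(‖(Submodule.Quotient.mk z : X ⧸ V)‖ : ℂ)⁻¹ • (g.comp π), fun v hv => ?_, ?_⟩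
  · have hv0 : π v = 0 := by
      rw [hπ]
      exact (Submodule.Quotient.mk_eq_zero V).2 hv
    simp [hv0]
  · simp only [ContinuousLinearMap.smul_apply, ContinuousLinearMap.comp_apply, hπ, hgz,
      smul_eq_mul]
    exact inv_mul_cancel₀ hnz

lemma exists_pick (hinf : ¬ FiniteDimensional ℂ X) {K : Set X} (hK : Dense K)
    (V : Submodule ℂ X) [FiniteDimensional ℂ V] (t : X) {r : ℝ} (hr : 0 < r) :
    ∃ y, y ∈ K ∧ y ∉ V ∧ ‖y - t‖ < r := by
  have hVc : IsClosed (V : Set X) := V.closed_of_finiteDimensional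
  have hint : interior (V : Set X) = ∅ := by
    by_contra h
    have hne : (interior (V : Set X)).Nonempty := Set.nonempty_iff_ne_empty.2 h
    have htop : V = ⊤ := V.eq_top_of_nonempty_interior' hne
    apply hinf
    haveI : FiniteDimensional ℂ (⊤ : Submodule ℂ X) := htop ▸ ‹FiniteDimensional ℂ V›
    exact (Submodule.topEquiv : (⊤ : Submodule ℂ X) ≃ₗ[ℂ] X).finiteDimensional
  have hdc : Dense ((V : Set X)ᶜ) := interior_eq_empty_iff_dense_compl.1 hint
  have hd : Dense (K ∩ (V : Set X)ᶜ) := hK.inter_of_isOpen_right hdc hVc.isOpen_compl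
  obtain ⟨y, hyb, hyK, hyV⟩ := Metric.dense_iff.1 hd t r hr
  exact ⟨y, hyK, hyV, by simpa [dist_eq_norm] using Metric.mem_ball.1 hyb⟩


lemma stepEx (S : X →L[ℂ] X) {ε : ℝ} (hε : 0 < ε) (u : ℕ → X)
    (hinf : ¬ FiniteDimensional ℂ X)
    (hdK : Dense {v : X | ∃ m : ℕ, 1 ≤ m ∧ (S ^ m) v = 0})
    (n : ℕ) (s : BS S ε u n) :
    ∃ t : BS S ε u (n + 1), s.L <+: t.L ∧ ‖t.F - s.F‖ ≤ ε / 2 * (1/2 : ℝ) ^ (n + 1) ∧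
      ∀ v ∈ Submodule.span ℂ {a | a ∈ s.L}, t.F v = s.F v := by
  classical
  set L := s.L with hLdef
  set V : Submodule ℂ X := Submodule.span ℂ {a | a ∈ L} with hVdef
  haveI : FiniteDimensional ℂ V := FiniteDimensional.span_of_finite ℂ L.finite_toSet
  have hrpos : (0:ℝ) < 1 / (((Nat.unpair n).2 : ℝ) + 1) := by positivity
  obtain ⟨y, hyK, hyV, hynear⟩ := exists_pick hinf hdK V (u (Nat.unpair n).1) hrpos
  obtain ⟨mK, hmK1, hmK0⟩ := hyK
  have hexm : ∃ m : ℕ, (S ^ m) y ∈ V := ⟨mK, by rw [hmK0]; exact V.zero_mem⟩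
  set m' := Nat.find hexm with hm'def
  have hm'spec : (S ^ m') y ∈ V := Nat.find_spec hexm
  have hm'min : ∀ i, i < m' → (S ^ i) y ∉ V := fun i hi => Nat.find_min hexm hi
  have hm'pos : 0 < m' := by
    rcases Nat.eq_zero_or_pos m' with h | h
    · exfalso
      apply hyV
      have h2 := hm'spec
      rwa [h, pow_zero, ContinuousLinearMap.one_apply] at h2
    · exact h
  set B : List X := (List.range m').map (fun i => (S ^ (m' - 1 - i)) y) with hBdef
  have hBlen : B.length = m' := by simp [hBdef]
  set L' : List X := L ++ B with hL'def
  have hlen' : L'.length = L.length + m' := by simp [hL'def, hBlen]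
  have hlo : ∀ i : ℕ, i < L.length → L'.getD i 0 = L.getD i 0 := by
    intro i hi
    rw [hL'def]
    exact List.getD_append L B 0 i hi
  have hhi : ∀ i : ℕ, L.length ≤ i → i < L'.length →
      L'.getD i 0 = (S ^ (m' - 1 - (i - L.length))) y := by
    intro i h1 h2
    rw [hL'def, List.getD_append_right L B 0 i h1]
    have hib : i - L.length < m' := by omega
    rw [List.getD_eq_getElem _ _ (by simpa [hBlen] using hib)]
    simp [hBdef]
  have hmemL' : ∀ a ∈ L, a ∈ L' := by
    intro a ha; rw [hL'def]; exact List.mem_append_left B ha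
  have hVle : V ≤ Submodule.span ℂ {a | a ∈ L'} := by
    rw [hVdef]
    exact Submodule.span_mono (fun a ha => hmemL' a ha)
  have hyB : y ∈ L' := by
    rw [hL'def]
    refine List.mem_append_right _ ?_
    rw [hBdef]
    refine List.mem_map.2 ⟨m' - 1, List.mem_range.2 (by omega), ?_⟩
    rw [Nat.sub_self, pow_zero, ContinuousLinearMap.one_apply]
  have hSVfull : ∀ v ∈ V, S v ∈ V := by
    rw [hVdef]
    exact span_stable S s.hSV
  -- quotient setup
  have hcomap : V ≤ V.comap (S : X →ₗ[ℂ] X) := by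
    intro v hv
    simpa [Submodule.mem_comap] using hSVfull v hv
  set Sq : X ⧸ V →ₗ[ℂ] X ⧸ V := V.mapQ V (S : X →ₗ[ℂ] X) hcomap with hSqdef
  have hSqpow : ∀ i : ℕ, ∀ w : X, (Sq ^ i) (Submodule.Quotient.mk w)
      = Submodule.Quotient.mk ((S ^ i) w) := by
    intro i w
    rw [hSqdef, mapQ_pow, clm_pow_apply]
  set newfam : Fin m' → X := fun i => (S ^ (m' - 1 - (i : ℕ))) y with hnf
  have hchainq : LinearIndependent ℂ
      fun i : Fin m' => (Sq ^ (m' - 1 - (i : ℕ))) (Submodule.Quotient.mk y) := by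
    refine chain_li Sq (Submodule.Quotient.mk y) m' ?_ ?_
    · rw [hSqpow]
      exact (Submodule.Quotient.mk_eq_zero V).2 hm'spec
    · rw [hSqpow]
      exact fun h => hm'min (m'-1) (by omega) ((Submodule.Quotient.mk_eq_zero V).1 h)
  have hcompq : LinearIndependent ℂ (V.mkQ ∘ newfam) := by
    have hfe : (V.mkQ ∘ newfam)
        = fun i : Fin m' => (Sq ^ (m' - 1 - (i : ℕ))) (Submodule.Quotient.mk y) := by
      funext i
      simp only [Function.comp_apply, hnf, Submodule.mkQ_apply, hSqpow]
    rw [hfe]; exact hchainq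
  have hnewind : LinearIndependent ℂ newfam := LinearIndependent.of_comp V.mkQ hcompq
  have hdisj : Disjoint (Submodule.span ℂ (Set.range fun i : Fin L.length => L.getD (i:ℕ) 0))
      (Submodule.span ℂ (Set.range newfam)) := by
    rw [Submodule.disjoint_def]
    intro v hv1 hv2
    obtain ⟨c, hc⟩ := (mem_span_range_iff_exists_fun ℂ).1 hv2
    have hvV : v ∈ V := by rw [hVdef, spanL_eq]; exact hv1
    have hq : (∑ i, c i • (V.mkQ ∘ newfam) i) = 0 := by
      calc (∑ i, c i • (V.mkQ ∘ newfam) i) = V.mkQ (∑ i, c i • newfam i) := by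
            rw [map_sum]
            exact Finset.sum_congr rfl fun i _ => (map_smul _ _ _).symm
        _ = V.mkQ v := by rw [hc]
        _ = 0 := by rw [Submodule.mkQ_apply]; exact (Submodule.Quotient.mk_eq_zero V).2 hvV
    have hz := Fintype.linearIndependent_iff.1 hcompq c hq
    rw [← hc]
    exact Finset.sum_eq_zero fun i _ => by rw [hz i, zero_smul]
  have hsum : LinearIndependent ℂ
      (Sum.elim (fun i : Fin L.length => L.getD (i:ℕ) 0) newfam) :=
    LinearIndependent.sum_type s.hind hnewind hdisj
  have hind' : LinearIndependent ℂ fun i : Fin L'.length => L'.getD (i:ℕ) 0 := by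
    have h1 := hsum.comp finSumFinEquiv.symm finSumFinEquiv.symm.injective
    have h2 := h1.comp (finCongr hlen') (finCongr hlen').injective
    have hfe : (fun i : Fin L'.length => L'.getD (i:ℕ) 0)
        = ((Sum.elim (fun i : Fin L.length => L.getD (i:ℕ) 0) newfam ∘ finSumFinEquiv.symm)
            ∘ (finCongr hlen')) := by
      funext i
      by_cases hi : (i : ℕ) < L.length
      · have he : (finCongr hlen') i = Fin.castAdd m' ⟨(i:ℕ), hi⟩ := by
          apply Fin.ext; simp
        simp only [Function.comp_apply, he, finSumFinEquiv_symm_apply_castAdd, Sum.elim_inl]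
        exact hlo i hi
      · push_neg at hi
        have hi2 : (i:ℕ) - L.length < m' := by
          have := i.isLt; omega
        have he : (finCongr hlen') i = Fin.natAdd L.length ⟨(i:ℕ) - L.length, hi2⟩ := by
          apply Fin.ext; simp; omega
        simp only [Function.comp_apply, he, finSumFinEquiv_symm_apply_natAdd, Sum.elim_inr]
        rw [hhi i hi i.isLt]
    rw [hfe]; exact h2
  have hSV' : ∀ a ∈ L', S a ∈ Submodule.span ℂ {b | b ∈ L'} := by
    intro a ha
    rw [hL'def, List.mem_append] at ha
    rcases ha with ha | ha
    · exact hVle (s.hSV a ha)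
    · rw [hBdef, List.mem_map] at ha
      obtain ⟨i, hir, rfl⟩ := ha
      rw [List.mem_range] at hir
      have hSa : S ((S ^ (m' - 1 - i)) y) = (S ^ (m' - 1 - i + 1)) y := by
        rw [pow_succ', ContinuousLinearMap.mul_apply]
      rcases Nat.eq_zero_or_pos i with h0 | h0
      · subst h0
        have hh : m' - 1 - 0 + 1 = m' := by omega
        rw [hSa, hh]
        exact hVle hm'spec
      · have hh : m' - 1 - i + 1 = m' - 1 - (i - 1) := by omega
        rw [hSa, hh]
        apply Submodule.subset_span
        show (S ^ (m' - 1 - (i - 1))) y ∈ L ++ B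
        refine List.mem_append_right _ ?_
        rw [hBdef]
        exact List.mem_map.2 ⟨i - 1, List.mem_range.2 (by omega), rfl⟩
  have hdense' : ∀ m : ℕ, m < n + 1 → ∃ v ∈ Submodule.span ℂ {a | a ∈ L'},
      ‖v - u (Nat.unpair m).1‖ < 1 / ((Nat.unpair m).2 + 1) := by
    intro m hm
    rcases Nat.lt_or_ge m n with h | h
    · obtain ⟨v, hv, hvn⟩ := s.hdense m h
      exact ⟨v, hVle hv, hvn⟩
    · have hmn : m = n := by omega
      subst hmn
      exact ⟨y, Submodule.subset_span hyB, hynear⟩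
  have hxV : ∀ k : ℕ, k < L.length → L.getD k 0 ∈ V := by
    intro k hk
    rw [hVdef]
    exact Submodule.subset_span (getD_mem L k hk)
  -- branch on emptiness of L
  rcases Nat.eq_zero_or_pos L.length with hL0 | hLpos
  · -- first block : no perturbation
    have hF0 : ∀ v, s.F v = 0 := by
      intro v
      have := s.hrange v
      have hLnil : L = [] := List.length_eq_zero_iff.1 hL0
      rw [← hLdef, hLnil] at this
      simpa using this
    refine ⟨⟨L', s.F, ?_, hind', ?_, ?_, hSV', ?_, ?_, hdense'⟩, ?_, ?_, ?_⟩
    · have h5 := s.hlen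
      rw [← hLdef] at h5
      omega
    · intro v
      rw [hF0 v]
      exact Submodule.zero_mem _
    · calc ‖s.F‖ ≤ ε / 2 * (1 - (1/2:ℝ)^n) := s.hnorm
        _ ≤ ε / 2 * (1 - (1/2:ℝ)^(n+1)) := by
            have h1 : (1/2:ℝ)^(n+1) ≤ (1/2:ℝ)^n :=
              pow_le_pow_of_le_one (by norm_num) (by norm_num) (by omega)
            nlinarith
    · intro h0
      have hx0 : L'.getD 0 0 = (S ^ (m' - 1)) y := by
        have h5 : m' - 1 - (0 - L.length) = m' - 1 := by omega
        rw [hhi 0 (by omega) h0, h5]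
      rw [ContinuousLinearMap.add_apply, hF0, add_zero, hx0]
      have hstep1 : S ((S ^ (m' - 1)) y) = (S ^ m') y := by
        conv_rhs => rw [show m' = (m' - 1) + 1 by omega]
        rw [pow_succ', ContinuousLinearMap.mul_apply]
      have hVbot : V = ⊥ := by
        rw [hVdef, List.length_eq_zero_iff.1 hL0]
        simp
      have hm0 : (S ^ m') y = 0 := by
        have h2 := hm'spec
        rwa [hVbot, Submodule.mem_bot] at h2
      rw [hstep1, hm0]
    · intro k hk hklen
      have hk1 : k - L.length = k := by omega
      have hxk : L'.getD k 0 = (S ^ (m' - 1 - k)) y := by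
        rw [hhi k (by omega) hklen, hk1]
      have hxk1 : L'.getD (k - 1) 0 = (S ^ (m' - 1 - (k - 1))) y := by
        have hk2 : k - 1 - L.length = k - 1 := by omega
        rw [hhi (k - 1) (by omega) (by omega), hk2]
      refine ⟨fun i => if i = k - 1 then 1 else 0, ?_, by simp⟩
      rw [ContinuousLinearMap.add_apply, hF0, add_zero, hxk]
      have hkm : k < m' := by omega
      have hstep2 : S ((S ^ (m' - 1 - k)) y) = (S ^ (m' - 1 - (k - 1))) y := by
        conv_rhs => rw [show m' - 1 - (k - 1) = (m' - 1 - k) + 1 by omega]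
        rw [pow_succ', ContinuousLinearMap.mul_apply]
      rw [hstep2, sum_single_smul k (k - 1) (by omega) _ 1, one_smul, hxk1]
    · exact List.prefix_append L B
    · simp only [sub_self, norm_zero]
      positivity
    · intro v _; rfl
  · -- main branch : L nonempty, add rank-one perturbation
    have hxs_lt : L.length < L'.length := by omega
    have hxs : L'.getD L.length 0 = (S ^ (m' - 1)) y := by
      rw [hhi L.length le_rfl hxs_lt, Nat.sub_self, Nat.sub_zero]
    have hxsV : (S ^ (m' - 1)) y ∉ V := hm'min (m' - 1) (by omega)
    obtain ⟨φ, hφV, hφx⟩ := exists_functional V.closed_of_finiteDimensional hxsV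
    set w : X := L.getD (L.length - 1) 0 with hwdef
    have hwV : w ∈ V := hxV (L.length - 1) (by omega)
    have hwL' : L'.getD (L.length - 1) 0 = w := hlo (L.length - 1) (by omega)
    have hwtotmem : S ((S ^ (m' - 1)) y) + s.F ((S ^ (m' - 1)) y) ∈ V := by
      have h1 : S ((S ^ (m' - 1)) y) = (S ^ m') y := by
        conv_rhs => rw [show m' = (m' - 1) + 1 by omega]
        rw [pow_succ', ContinuousLinearMap.mul_apply]
      rw [h1]
      exact V.add_mem hm'spec (s.hrange _)
    obtain ⟨c₀, hc₀⟩ := exists_coeffs (L := L) hwtotmem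
    set P : ℝ := ‖φ‖ * ‖w‖ with hPdef
    have hP0 : 0 ≤ P := by positivity
    set μ : ℝ := (ε / 2 * (1/2:ℝ) ^ (n+1)) / (P + 1) with hμdef
    have hμpos : 0 < μ := by
      rw [hμdef]
      positivity
    set δ : ℂ := if c₀ (L.length - 1) + (μ:ℂ) = 0 then (μ:ℂ)/2 else (μ:ℂ) with hδdef
    have hμC : ((μ:ℝ):ℂ) ≠ 0 := by
      exact_mod_cast hμpos.ne'
    have hδne : c₀ (L.length - 1) + δ ≠ 0 := by
      rw [hδdef]
      split_ifs with h
      · intro hcon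
        exact hμC (by linear_combination 2*h - 2*hcon)
      · exact h
    have hnr : ‖((μ:ℝ):ℂ)‖ = μ := by
      rw [Complex.norm_real, Real.norm_eq_abs]
      exact abs_of_pos hμpos
    have hδnorm : ‖δ‖ ≤ μ := by
      rw [hδdef]
      split_ifs
      · have h2 : ‖((μ:ℝ):ℂ)/2‖ = μ/2 := by
          rw [norm_div, hnr]
          norm_num
        rw [h2]
        linarith
      · rw [hnr]
    set G : X →L[ℂ] X := (δ • φ).smulRight w with hGdef
    have hGapp : ∀ v, G v = (δ * φ v) • w := by
      intro v
      rw [hGdef]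
      simp [ContinuousLinearMap.smulRight_apply, smul_eq_mul]
    have hGnorm : ‖G‖ ≤ ε / 2 * (1/2:ℝ)^(n+1) := by
      rw [hGdef, ContinuousLinearMap.norm_smulRight_apply, norm_smul]
      have h2 : ‖δ‖ * ‖φ‖ * ‖w‖ ≤ μ * P := by
        rw [hPdef, ← mul_assoc]
        nlinarith [norm_nonneg φ, norm_nonneg w, norm_nonneg δ, hδnorm]
      have h4 : μ * (P+1) = ε / 2 * (1/2:ℝ)^(n+1) := by
        rw [hμdef]
        field_simp
      nlinarith
    set F' : X →L[ℂ] X := s.F + G with hF'def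
    have hGold : ∀ v ∈ V, G v = 0 := by
      intro v hv
      rw [hGapp, hφV v hv, mul_zero, zero_smul]
    have hvanish : ∀ v ∈ Submodule.span ℂ {a | a ∈ s.L}, F' v = s.F v := by
      intro v hv
      rw [hF'def, ContinuousLinearMap.add_apply, hGold v hv, add_zero]
    have hFd : ‖F' - s.F‖ ≤ ε / 2 * (1/2:ℝ)^(n+1) := by
      rw [hF'def, add_sub_cancel_left]
      exact hGnorm
    refine ⟨⟨L', F', ?_, hind', ?_, ?_, hSV', ?_, ?_, hdense'⟩, List.prefix_append L B, hFd, hvanish⟩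
    · have h5 := s.hlen
      rw [← hLdef] at h5
      omega
    · intro v
      rw [hF'def, ContinuousLinearMap.add_apply, hGapp]
      exact Submodule.add_mem _ (hVle (s.hrange v))
        (Submodule.smul_mem _ _ (Submodule.subset_span (hmemL' w (getD_mem L _ (by omega)))))
    · calc ‖F'‖ ≤ ‖s.F‖ + ‖G‖ := by
            rw [hF'def]
            exact norm_add_le _ _
        _ ≤ ε/2 * (1 - (1/2:ℝ)^n) + ε/2 * (1/2:ℝ)^(n+1) := add_le_add s.hnorm hGnorm
        _ = ε/2 * (1 - (1/2:ℝ)^(n+1)) := by ring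
    · intro h0
      rw [hlo 0 hLpos]
      simp only [hF'def, ContinuousLinearMap.add_apply]
      rw [hGold _ (hxV 0 hLpos), add_zero]
      have h2 := s.hshift0 hLpos
      rw [ContinuousLinearMap.add_apply] at h2
      exact h2
    · intro k hk hklen
      rcases lt_trichotomy k L.length with hcase | rfl | hcase
      · obtain ⟨c, hcs, hcne⟩ := s.hshift k hk hcase
        refine ⟨c, ?_, hcne⟩
        rw [hlo k hcase]
        simp only [hF'def, ContinuousLinearMap.add_apply]
        rw [hGold _ (hxV k hcase), add_zero]
        have h2 : S (L.getD k 0) + s.F (L.getD k 0)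
            = ∑ i ∈ Finset.range k, c i • L.getD i 0 := by
          rw [← ContinuousLinearMap.add_apply]
          exact hcs
        rw [h2]
        exact Finset.sum_congr rfl fun i hi => by
          rw [hlo i (by have := Finset.mem_range.1 hi; omega)]
      · refine ⟨fun i => c₀ i + (if i = L.length - 1 then δ else 0), ?_, ?_⟩
        · rw [hxs]
          simp only [hF'def, ContinuousLinearMap.add_apply]
          rw [hGapp, hφx, mul_one]
          have hsum2 : (∑ i ∈ Finset.range L.length,
                (c₀ i + if i = L.length - 1 then δ else 0) • L'.getD i 0)
              = (∑ i ∈ Finset.range L.length, c₀ i • L.getD i 0) + δ • w := by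
            have e1 : ∀ i ∈ Finset.range L.length,
                (c₀ i + if i = L.length - 1 then δ else 0) • L'.getD i 0
                = c₀ i • L.getD i 0 + (if i = L.length - 1 then δ else 0) • L'.getD i 0 := by
              intro i hi
              rw [add_smul, hlo i (Finset.mem_range.1 hi)]
            rw [Finset.sum_congr rfl e1, Finset.sum_add_distrib,
              sum_single_smul L.length (L.length - 1) (by omega) _ δ, hwL']
          rw [hsum2, ← hc₀]
          abel
        · beta_reduce
          rw [if_pos rfl]
          exact hδne
      · have hxk : L'.getD k 0 = (S ^ (m' - 1 - (k - L.length))) y :=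
          hhi k (by omega) hklen
        have hxk1 : L'.getD (k - 1) 0 = (S ^ (m' - 1 - (k - 1 - L.length))) y :=
          hhi (k - 1) (by omega) (by omega)
        obtain ⟨c₁, hc₁⟩ := exists_coeffs (L := L) (s.hrange (L'.getD k 0))
        refine ⟨fun i => (if i = k - 1 then 1 else 0) + ((if i < L.length then c₁ i else 0)
          + (if i = L.length - 1 then δ * φ (L'.getD k 0) else 0)), ?_, ?_⟩
        · simp only [hF'def, ContinuousLinearMap.add_apply]
          rw [hGapp]
          have hSxk : S (L'.getD k 0) = L'.getD (k - 1) 0 := by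
            rw [hxk, hxk1]
            have hkb : k - L.length < m' := by omega
            conv_rhs => rw [show m' - 1 - (k - 1 - L.length)
              = (m' - 1 - (k - L.length)) + 1 by omega]
            rw [pow_succ', ContinuousLinearMap.mul_apply]
          have hmid : (∑ i ∈ Finset.range k, (if i < L.length then c₁ i else 0) • L'.getD i 0)
              = ∑ i ∈ Finset.range L.length, c₁ i • L.getD i 0 := by
            have h1 : (∑ i ∈ Finset.range L.length,
                  (if i < L.length then c₁ i else 0) • L'.getD i 0)
                = ∑ i ∈ Finset.range k, (if i < L.length then c₁ i else 0) • L'.getD i 0 :=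
              Finset.sum_subset (Finset.range_subset_range.2 (by omega))
                (fun x _ hnx => by rw [if_neg (by simpa using hnx), zero_smul])
            rw [← h1]
            exact Finset.sum_congr rfl fun i hi => by
              have hil := Finset.mem_range.1 hi
              rw [if_pos hil, hlo i hil]
          have hsplit : (∑ i ∈ Finset.range k, ((if i = k - 1 then (1:ℂ) else 0)
                + ((if i < L.length then c₁ i else 0)
                  + (if i = L.length - 1 then δ * φ (L'.getD k 0) else 0))) • L'.getD i 0)
              = L'.getD (k - 1) 0 + (s.F (L'.getD k 0) + (δ * φ (L'.getD k 0)) • w) := by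
            have e1 : ∀ i ∈ Finset.range k, ((if i = k - 1 then (1:ℂ) else 0)
                + ((if i < L.length then c₁ i else 0)
                  + (if i = L.length - 1 then δ * φ (L'.getD k 0) else 0))) • L'.getD i 0
                = (if i = k - 1 then (1:ℂ) else 0) • L'.getD i 0
                  + ((if i < L.length then c₁ i else 0) • L'.getD i 0
                    + (if i = L.length - 1 then δ * φ (L'.getD k 0) else 0) • L'.getD i 0) := by
              intro i _
              rw [add_smul, add_smul]
            rw [Finset.sum_congr rfl e1, Finset.sum_add_distrib, Finset.sum_add_distrib,
              sum_single_smul k (k - 1) (by omega) _ 1, one_smul, hmid, ← hc₁,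
              sum_single_smul k (L.length - 1) (by omega) _ _, hwL']
          rw [hsplit, hSxk]
        · beta_reduce
          rw [if_pos rfl, if_neg (by omega), if_neg (by omega)]
          norm_num

lemma seqEx (S : X →L[ℂ] X) {ε : ℝ} (hε : 0 < ε) (u : ℕ → X)
    (hinf : ¬ FiniteDimensional ℂ X)
    (hdK : Dense {v : X | ∃ m : ℕ, 1 ≤ m ∧ (S ^ m) v = 0}) :
    ∃ st : ∀ n, BS S ε u n, ∀ n, (st n).L <+: (st (n+1)).L ∧
      ‖(st (n+1)).F - (st n).F‖ ≤ ε / 2 * (1/2 : ℝ) ^ (n+1) ∧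
      ∀ v ∈ Submodule.span ℂ {a | a ∈ (st n).L}, (st (n+1)).F v = (st n).F v := by
  refine ⟨fun n => Nat.rec (BSinit S ε u)
    (fun n s => (stepEx S hε u hinf hdK n s).choose) n, fun n => ?_⟩
  exact (stepEx S hε u hinf hdK n _).choose_spec


end Stmt7Aux
end

set_option maxHeartbeats 1000000 in
theorem stmt7 {X : Type*} [NormedAddCommGroup X] [NormedSpace ℂ X] [CompleteSpace X]
    [TopologicalSpace.SeparableSpace X] (hinf : ¬ FiniteDimensional ℂ X)
    (S : X →L[ℂ] X)
    (hdense : Dense {v : X | ∃ m : ℕ, 1 ≤ m ∧ (S ^ m) v = 0}) :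
    ∀ ε : ℝ, 0 < ε → ∃ S' : X →L[ℂ] X, ‖S - S'‖ < ε ∧
      ∃ x : ℕ → X, LinearIndependent ℂ x ∧
        Dense (Submodule.span ℂ (Set.range x) : Set X) ∧
        IsGenBackwardOneShift S' x := by
  intro ε hε
  classical
  haveI : Nonempty X := ⟨0⟩
  obtain ⟨u, hu⟩ := TopologicalSpace.exists_dense_seq X
  obtain ⟨st, hstep⟩ := Stmt7Aux.seqEx S hε u hinf hdense
  have hpref : ∀ a b : ℕ, a ≤ b → (st a).L <+: (st b).L := by
    intro a b hab
    induction b with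
    | zero =>
        have : a = 0 := by omega
        subst this
        exact List.prefix_refl _
    | succ b ih =>
        rcases Nat.lt_or_ge a (b+1) with h | h
        · exact (ih (by omega)).trans (hstep b).1
        · have : a = b + 1 := by omega
          subst this
          exact List.prefix_refl _
  set x : ℕ → X := fun k => (st (k+1)).L.getD k 0 with hxdef
  have hxlt : ∀ k, k < (st (k+1)).L.length := fun k =>
    lt_of_lt_of_le (Nat.lt_succ_self k) (st (k+1)).hlen
  have hx_eq : ∀ n k, k < (st n).L.length → x k = (st n).L.getD k 0 := by
    intro n k hk
    rcases Nat.le_total n (k+1) with h | h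
    · obtain ⟨tl, htl⟩ := hpref n (k+1) h
      show (st (k+1)).L.getD k 0 = (st n).L.getD k 0
      rw [← htl]
      exact List.getD_append _ _ _ _ hk
    · obtain ⟨tl, htl⟩ := hpref (k+1) n h
      show (st (k+1)).L.getD k 0 = (st n).L.getD k 0
      rw [← htl]
      exact (List.getD_append _ _ _ _ (hxlt k)).symm
  have hcau : CauchySeq (fun n => (st n).F) := by
    apply cauchySeq_of_le_geometric (1/2 : ℝ) (ε/2 * (1/2)) (by norm_num)
    intro n
    rw [dist_eq_norm, norm_sub_rev]
    calc ‖(st (n+1)).F - (st n).F‖ ≤ ε/2 * (1/2:ℝ)^(n+1) := (hstep n).2.1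
      _ = ε/2 * (1/2) * (1/2:ℝ)^n := by ring
  obtain ⟨Fl, hFl⟩ := cauchySeq_tendsto_of_complete hcau
  have hFlnorm : ‖Fl‖ ≤ ε/2 := by
    have h1 : Filter.Tendsto (fun n => ‖(st n).F‖) Filter.atTop (nhds ‖Fl‖) := hFl.norm
    refine le_of_tendsto' h1 fun n => ?_
    have h2 : (0:ℝ) ≤ (1/2:ℝ)^n := by positivity
    calc ‖(st n).F‖ ≤ ε/2 * (1 - (1/2:ℝ)^n) := (st n).hnorm
      _ ≤ ε/2 := by nlinarith
  have hspanmono : ∀ a b : ℕ, a ≤ b →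
      Submodule.span ℂ {q | q ∈ (st a).L} ≤ Submodule.span ℂ {q | q ∈ (st b).L} := by
    intro a b hab
    apply Submodule.span_mono
    intro q hq
    obtain ⟨tl, htl⟩ := hpref a b hab
    rw [← htl]
    exact List.mem_append_left _ hq
  have hFlv : ∀ n₀, ∀ v ∈ Submodule.span ℂ {q | q ∈ (st n₀).L}, Fl v = (st n₀).F v := by
    intro n₀ v hv
    have hconst : ∀ m, n₀ ≤ m → (st m).F v = (st n₀).F v := by
      intro m hm
      induction m with
      | zero =>
          have : n₀ = 0 := by omega
          rw [this]
      | succ m ih =>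
          rcases Nat.lt_or_ge n₀ (m+1) with h | h
          · have h1 : n₀ ≤ m := by omega
            rw [(hstep m).2.2 v (hspanmono n₀ m h1 hv), ih h1]
          · have : n₀ = m + 1 := by omega
            rw [this]
    have h2 : Filter.Tendsto (fun n => (st n).F v) Filter.atTop (nhds (Fl v)) := by
      have hc : Continuous (fun T : X →L[ℂ] X => T v) :=
        (ContinuousLinearMap.apply ℂ X v).continuous
      exact (hc.tendsto Fl).comp hFl
    have h3 : Filter.Tendsto (fun n => (st n).F v) Filter.atTop (nhds ((st n₀).F v)) := by
      apply Filter.Tendsto.congr' _ tendsto_const_nhds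
      filter_upwards [Filter.eventually_ge_atTop n₀] with m hm
      exact (hconst m hm).symm
    exact tendsto_nhds_unique h2 h3
  refine ⟨S + Fl, ?_, x, ?_, ?_, ?_, ?_⟩
  · have h1 : S - (S + Fl) = -Fl := by abel
    rw [h1, norm_neg]
    linarith
  · -- linear independence
    rw [linearIndependent_iff']
    intro t g hsum0 i hit
    set N := (t.sup id) + 1 with hN
    have hN' : ∀ j : {y // y ∈ t}, (j : ℕ) < (st N).L.length := by
      intro j
      have h1 : (j : ℕ) ≤ t.sup id := Finset.le_sup (f := id) j.2
      have h2 : N ≤ (st N).L.length := (st N).hlen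
      omega
    have hxind : LinearIndependent ℂ (fun i : Fin (st N).L.length => x (i:ℕ)) := by
      have h0 := (st N).hind
      have he : (fun i : Fin (st N).L.length => x (i:ℕ))
          = (fun i : Fin (st N).L.length => (st N).L.getD (i:ℕ) 0) := by
        funext i
        exact hx_eq N i i.isLt
      rw [he]
      exact h0
    have hemb : Function.Injective
        (fun j : {y // y ∈ t} => (⟨(j:ℕ), hN' j⟩ : Fin (st N).L.length)) := by
      intro a b hab
      exact Subtype.ext (by simpa using congrArg Fin.val hab)
    have hsubli : LinearIndependent ℂ (fun j : {y // y ∈ t} => x (j : ℕ)) :=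
      hxind.comp _ hemb
    rw [Fintype.linearIndependent_iff] at hsubli
    refine hsubli (fun j => g j) ?_ ⟨i, hit⟩
    rw [← hsum0]
    exact Finset.sum_coe_sort t (fun j => g j • x j)
  · -- density
    rw [Metric.dense_iff]
    intro p r hr
    obtain ⟨m0, hm0⟩ := Metric.denseRange_iff.1 hu p (r/2) (by linarith)
    obtain ⟨j, hj⟩ := exists_nat_one_div_lt (show (0:ℝ) < r/2 by linarith)
    set n := Nat.pair m0 j with hn
    obtain ⟨v, hv, hvnear⟩ := (st (n+1)).hdense n (Nat.lt_succ_self n)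
    refine ⟨v, Metric.mem_ball.2 ?_, ?_⟩
    · have h1 : ‖v - u m0‖ < 1/((j:ℝ)+1) := by
        have := hvnear
        rw [hn, Nat.unpair_pair] at this
        exact this
      have h2 : dist p (u m0) < r/2 := hm0
      calc dist v p ≤ dist v (u m0) + dist (u m0) p := dist_triangle _ _ _
        _ < 1/((j:ℝ)+1) + r/2 := by
            rw [dist_eq_norm]
            exact add_lt_add h1 (by rw [dist_comm] at h2; exact h2)
        _ ≤ r/2 + r/2 := by linarith
        _ = r := by ring
    · have hle : Submodule.span ℂ {q | q ∈ (st (n+1)).L}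
          ≤ Submodule.span ℂ (Set.range x) := by
        apply Submodule.span_le.2
        intro q hq
        obtain ⟨i, hi, rfl⟩ := List.mem_iff_getElem.1 hq
        apply Submodule.subset_span
        exact ⟨i, by rw [hx_eq (n+1) i hi, List.getD_eq_getElem _ _ hi]⟩
      exact hle hv
  · -- shift property at 0
    have h0len : 0 < (st 1).L.length := lt_of_lt_of_le Nat.one_pos (st 1).hlen
    have hx0 : x 0 = (st 1).L.getD 0 0 := hx_eq 1 0 h0len
    have hmem : x 0 ∈ Submodule.span ℂ {q | q ∈ (st 1).L} := by
      rw [hx0]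
      exact Submodule.subset_span (Stmt7Aux.getD_mem _ _ h0len)
    have hFl0 : Fl (x 0) = (st 1).F (x 0) := hFlv 1 _ hmem
    have h2 := (st 1).hshift0 h0len
    rw [ContinuousLinearMap.add_apply] at h2 ⊢
    rw [hFl0, hx0]
    exact h2
  · -- shift property at k ≥ 1
    intro k hk
    have hklen : k < (st (k+1)).L.length := hxlt k
    obtain ⟨c, hcs, hcne⟩ := (st (k+1)).hshift k (by omega) hklen
    refine ⟨c, ?_, hcne⟩
    have hmem : x k ∈ Submodule.span ℂ {q | q ∈ (st (k+1)).L} :=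
      Submodule.subset_span (Stmt7Aux.getD_mem _ _ hklen)
    have hFlk : Fl (x k) = (st (k+1)).F (x k) := hFlv (k+1) _ hmem
    rw [ContinuousLinearMap.add_apply, hFlk]
    have hxk : x k = (st (k+1)).L.getD k 0 := rfl
    rw [hxk, ← ContinuousLinearMap.add_apply, hcs]
    exact Finset.sum_congr rfl fun i hi =>
      by rw [hx_eq (k+1) i (lt_trans (Finset.mem_range.1 hi) hklen)]
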